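/- arXiv:0802.2044 — 2 statements merged into one kernel-verified Lean document; each statement's English description precedes it below -/
import Mathlib

section
/- Let X be a group, K an X-module, and suppose μ : (K⋊X) ×_X (K⋊X) → K⋊X is a group homomorphism over X making π : K⋊X → X a group object in groups over X. Then there exists a derivation ξ : X → K such that μ((k,x),(k',x)) = (k + k' + ξ(x), x) for all k, k' ∈ K and x ∈ X. -/
/-- A derivation with respect to a homomorphism `p : Y →* X`, valued in an `X`-module `K`. -/
def IsDeriv {Y X K : Type*} [Group Y] [Group X] [AddCommGroup K] [DistribMulAction X K]
    (p : Y →* X) (ξ : Y → K) : Prop :=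
  ∀ y₁ y₂ : Y, ξ (y₁ * y₂) = ξ y₁ + p y₁ • ξ y₂

/-- The semidirect product `K ⋊ X` of a group `X` by an `X`-module `K`. -/
@[ext]
structure SDP (K X : Type*) where
  k : K
  x : X

namespace SDP

variable {K X : Type*} [Group X] [AddCommGroup K] [DistribMulAction X K]

instance : Mul (SDP K X) := ⟨fun a b => ⟨a.k + a.x • b.k, a.x * b.x⟩⟩
instance : One (SDP K X) := ⟨⟨0, 1⟩⟩
instance : Inv (SDP K X) := ⟨fun a => ⟨-(a.x⁻¹ • a.k), a.x⁻¹⟩⟩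

@[simp] theorem mul_def (a b : SDP K X) : a * b = ⟨a.k + a.x • b.k, a.x * b.x⟩ := rfl
@[simp] theorem one_def : (1 : SDP K X) = ⟨0, 1⟩ := rfl
@[simp] theorem inv_def (a : SDP K X) : a⁻¹ = ⟨-(a.x⁻¹ • a.k), a.x⁻¹⟩ := rfl

instance : Group (SDP K X) where
  mul := (· * ·)
  one := 1
  inv := Inv.inv
  mul_assoc a b c := by ext <;> simp [mul_smul, smul_add, add_assoc, mul_assoc]
  one_mul a := by ext <;> simp
  mul_one a := by ext <;> simp
  inv_mul_cancel a := by ext <;> simp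

/-- The projection `K ⋊ X →* X`. -/
def proj (K X : Type*) [Group X] [AddCommGroup K] [DistribMulAction X K] :
    SDP K X →* X where
  toFun a := a.x
  map_one' := rfl
  map_mul' _ _ := rfl

end SDP

/-- any group object multiplication over `X` on `π : K ⋊ X → X` is given
by `μ((k,x),(k',x)) = (k + k' + ξ x, x)` for some derivation `ξ : X → K`. -/
theorem stmt8 {X K : Type*} [Group X] [AddCommGroup K] [DistribMulAction X K]
    (m : SDP K X → SDP K X → SDP K X)
    (hover : ∀ a b : SDP K X, a.x = b.x → (m a b).x = a.x)
    (hhom : ∀ a b c d : SDP K X, a.x = b.x → c.x = d.x → m (a * c) (b * d) = m a b * m c d)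
    (hassoc : ∀ a b c : SDP K X, a.x = b.x → b.x = c.x → m (m a b) c = m a (m b c))
    (e : X →* SDP K X) (hsec : ∀ x : X, (e x).x = x)
    (hunitr : ∀ a : SDP K X, m a (e a.x) = a)
    (hunitl : ∀ a : SDP K X, m (e a.x) a = a)
    (i : SDP K X →* SDP K X) (hiover : ∀ a : SDP K X, (i a).x = a.x)
    (hinv : ∀ a : SDP K X, m a (i a) = e a.x) :
    ∃ xi : X → K, IsDeriv (MonoidHom.id X) xi ∧
      ∀ (k k' : K) (x : X), m ⟨k, x⟩ ⟨k', x⟩ = ⟨k + k' + xi x, x⟩ := by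
  have he1 : e 1 = (⟨0, 1⟩ : SDP K X) := by rw [map_one]; rfl
  have h1 : ∀ k l : K, m ⟨k, 1⟩ ⟨l, 1⟩ = ⟨k + l, 1⟩ := by
    intro k l
    have hr : m ⟨k, 1⟩ ⟨0, 1⟩ = (⟨k, 1⟩ : SDP K X) := by
      have := hunitr ⟨k, (1 : X)⟩; rwa [show ((⟨k, 1⟩ : SDP K X)).x = 1 from rfl, he1] at this
    have hl : m ⟨0, 1⟩ ⟨l, 1⟩ = (⟨l, 1⟩ : SDP K X) := by
      have := hunitl ⟨l, (1 : X)⟩; rwa [show ((⟨l, 1⟩ : SDP K X)).x = 1 from rfl, he1] at this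
    have := hhom ⟨k, 1⟩ ⟨0, 1⟩ ⟨0, 1⟩ ⟨l, 1⟩ rfl rfl
    simp only [SDP.mul_def, one_smul, smul_zero, add_zero, zero_add, one_mul, hr, hl] at this
    simpa using this
  set xi : X → K := fun x => (m ⟨0, x⟩ ⟨0, x⟩).k with hxi
  have hdiag : ∀ x : X, m ⟨0, x⟩ ⟨0, x⟩ = ⟨xi x, x⟩ := by
    intro x
    ext
    · rfl
    · exact hover ⟨0, x⟩ ⟨0, x⟩ rfl
  have hmain : ∀ (k l : K) (x : X), m ⟨k, x⟩ ⟨l, x⟩ = ⟨k + l + xi x, x⟩ := by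
    intro k l x
    have := hhom ⟨k, 1⟩ ⟨l, 1⟩ ⟨0, x⟩ ⟨0, x⟩ rfl rfl
    simp only [SDP.mul_def, one_smul, smul_zero, add_zero, one_mul, h1, hdiag] at this
    simpa using this
  refine ⟨xi, ?_, hmain⟩
  intro x y
  have := hhom ⟨0, x⟩ ⟨0, x⟩ ⟨0, y⟩ ⟨0, y⟩ rfl rfl
  simp only [SDP.mul_def, smul_zero, add_zero, hdiag] at this
  have := congrArg SDP.k this
  simpa using this
end

section
/- Let p : Y → X be a group object in the category of groups over X, with unit section e : X → Y. Then K := ker(p) is an abelian subgroup of Y, X acts on K by x · k = e(x) k e(x)⁻¹, making K an X-module, and the map K ⋊ X → Y, (k, x) ↦ k · e(x), is a group isomorphism over X. -/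
/-- for a group object `p : Y → X` in groups over `X` with unit section
`e`, the kernel `K = ker p` is abelian, `X` acts on it by `x • k = e x * k * (e x)⁻¹`,
and `(k, x) ↦ k * e x` is a group isomorphism `K ⋊ X → Y` over `X`. -/
theorem stmt10 {Y X : Type*} [Group Y] [Group X] (p : Y →* X)
    (m : Y → Y → Y)
    (hover : ∀ a b : Y, p a = p b → p (m a b) = p a)
    (hhom : ∀ a b c d : Y, p a = p b → p c = p d → m (a * c) (b * d) = m a b * m c d)
    (hassoc : ∀ a b c : Y, p a = p b → p b = p c → m (m a b) c = m a (m b c))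
    (e : X →* Y) (hsec : ∀ x : X, p (e x) = x)
    (hunitr : ∀ y : Y, m y (e (p y)) = y)
    (hunitl : ∀ y : Y, m (e (p y)) y = y)
    (i : Y →* Y) (hiover : ∀ y : Y, p (i y) = p y)
    (hinv : ∀ y : Y, m y (i y) = e (p y)) :
    (∀ a b : Y, a ∈ p.ker → b ∈ p.ker → a * b = b * a) ∧
    (∀ (x : X) (a : Y), a ∈ p.ker → e x * a * (e x)⁻¹ ∈ p.ker) ∧
    Function.Bijective (fun q : p.ker × X => (q.1 : Y) * e q.2) ∧
    (∀ (a b : p.ker) (x x' : X),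
      ((a : Y) * e x) * ((b : Y) * e x') = ((a : Y) * (e x * (b : Y) * (e x)⁻¹)) * e (x * x')) ∧
    (∀ (a : p.ker) (x : X), p ((a : Y) * e x) = x) := by

  have hcomm : ∀ a b : Y, a ∈ p.ker → b ∈ p.ker → a * b = b * a := by
    intro a b ha hb
    have ha' : p a = 1 := ha
    have hb' : p b = 1 := hb
    have e1 : e 1 = 1 := map_one e
    have hma1 : m a 1 = a := by have := hunitr a; rwa [ha', e1] at this
    have hmb1 : m b 1 = b := by have := hunitr b; rwa [hb', e1] at this
    have hm1a : m 1 a = a := by have := hunitl a; rwa [ha', e1] at this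
    have hm1b : m 1 b = b := by have := hunitl b; rwa [hb', e1] at this
    have h1 : m (a * 1) (1 * b) = m a 1 * m 1 b := by
      refine hhom a 1 1 b ?_ ?_ <;> simp [ha', hb']
    have h2 : m (1 * a) (b * 1) = m 1 b * m a 1 := by
      refine hhom 1 b a 1 ?_ ?_ <;> simp [ha', hb']
    simp only [mul_one, one_mul, hma1, hmb1, hm1a, hm1b] at h1 h2
    rw [← h1, h2]
  refine ⟨hcomm, ?_, ⟨?_, ?_⟩, ?_, ?_⟩
  · intro x a ha
    have ha' : p a = 1 := ha
    simp [MonoidHom.mem_ker, ha', hsec]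
  · rintro ⟨⟨a, ha⟩, x⟩ ⟨⟨b, hb⟩, x'⟩ h
    have ha' : p a = 1 := ha
    have hb' : p b = 1 := hb
    simp only at h
    have hx : x = x' := by
      have := congrArg p h
      simpa [ha', hb', hsec] using this
    subst hx
    have : a = b := by
      have := mul_right_cancel h
      exact this
    simp [this]
  · intro y
    refine ⟨⟨⟨y * (e (p y))⁻¹, ?_⟩, p y⟩, ?_⟩
    · simp [MonoidHom.mem_ker, hsec]
    · simp
  · intro a b x x'
    simp only [map_mul]
    group
  · intro a x
    have : p (a : Y) = 1 := a.2
    simp [this, hsec]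
end
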